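/- For any matrix A ∈ F_q^{m×n} there exists a partition S_0, S_1, ..., S_ℓ of [n] into pairwise disjoint sets such that: (i) if i ∈ S_0 then σ_i = 0 for all σ ∈ ker(A); (ii) if i, j ∈ S_h for some h ∈ [ℓ], then the marginal μ_{A,i} is uniform on F_q and there exists s ∈ F_q \ {0} with σ_j = s·σ_i for all σ ∈ ker(A); (iii) if i ∈ S_g and j ∈ S_h with 1 ≤ g < h ≤ ℓ, then the joint marginal μ_{A,i,j}(τ,τ') = 1/q² for all τ, τ' ∈ F_q. -/

import Mathlib

open scoped BigOperators
open Finset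

section Aux

variable {F : Type} [Field F] [Fintype F] [DecidableEq F] {m n : ℕ}

def frozenP (A : Matrix (Fin m) (Fin n) F) (i : Fin n) : Prop :=
  ∀ v : Fin n → F, A.mulVec v = 0 → v i = 0

def relP (A : Matrix (Fin m) (Fin n) F) (i j : Fin n) : Prop :=
  ∃ s : F, s ≠ 0 ∧ ∀ v : Fin n → F, A.mulVec v = 0 → v j = s * v i

lemma relP_refl (A : Matrix (Fin m) (Fin n) F) (i : Fin n) : relP A i i :=
  ⟨1, one_ne_zero, fun v _ => (one_mul _).symm⟩

lemma relP_symm {A : Matrix (Fin m) (Fin n) F} {i j : Fin n} (h : relP A i j) : relP A j i := by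
  obtain ⟨s, hs, h⟩ := h
  exact ⟨s⁻¹, inv_ne_zero hs, fun v hv => by
    rw [h v hv, ← mul_assoc, inv_mul_cancel₀ hs, one_mul]⟩

lemma relP_trans {A : Matrix (Fin m) (Fin n) F} {i j k : Fin n}
    (h1 : relP A i j) (h2 : relP A j k) : relP A i k := by
  obtain ⟨s, hs, h1⟩ := h1
  obtain ⟨t, ht, h2⟩ := h2
  exact ⟨t * s, mul_ne_zero ht hs, fun v hv => by rw [h2 v hv, h1 v hv, mul_assoc]⟩

lemma not_frozen_of_rel {A : Matrix (Fin m) (Fin n) F} {i j : Fin n}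
    (hi : ¬ frozenP A i) (h : relP A i j) : ¬ frozenP A j := by
  intro hj
  apply hi
  obtain ⟨s, hs, h⟩ := relP_symm h
  intro v hv
  rw [h v hv, hj v hv, mul_zero]

open Classical in
noncomputable def classOf (A : Matrix (Fin m) (Fin n) F) (i : Fin n) : Finset (Fin n) :=
  Finset.univ.filter (relP A i)

lemma mem_classOf {A : Matrix (Fin m) (Fin n) F} {i j : Fin n} :
    j ∈ classOf A i ↔ relP A i j := by
  classical
  simp [classOf]

lemma classOf_eq {A : Matrix (Fin m) (Fin n) F} {i j : Fin n} (h : relP A i j) :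
    classOf A i = classOf A j := by
  ext k
  simp only [mem_classOf]
  exact ⟨fun hk => relP_trans (relP_symm h) hk, fun hk => relP_trans h hk⟩

open Classical in
noncomputable def classSet (A : Matrix (Fin m) (Fin n) F) : Finset (Finset (Fin n)) :=
  (Finset.univ.filter fun i => ¬ frozenP A i).image (classOf A)

lemma mem_classSet {A : Matrix (Fin m) (Fin n) F} {c : Finset (Fin n)} :
    c ∈ classSet A ↔ ∃ i, ¬ frozenP A i ∧ classOf A i = c := by
  classical
  simp [classSet]

/-- fiber translation -/
def fiberEquiv {V : Type} [AddCommGroup V] (A : Matrix (Fin m) (Fin n) F)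
    (φ : (Fin n → F) → V)
    (hadd : ∀ a b : Fin n → F, φ (a + b) = φ a + φ b)
    (hsub : ∀ a b : Fin n → F, φ (a - b) = φ a - φ b)
    {t1 t2 : V} (d : Fin n → F) (hd1 : A.mulVec d = 0) (hd2 : φ d = t2 - t1) :
    {v : Fin n → F // A.mulVec v = 0 ∧ φ v = t1} ≃
      {v : Fin n → F // A.mulVec v = 0 ∧ φ v = t2} where
  toFun v := ⟨v.1 + d, by
    constructor
    · rw [Matrix.mulVec_add, v.2.1, hd1, add_zero]
    · rw [hadd, v.2.2, hd2]; abel⟩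
  invFun v := ⟨v.1 - d, by
    constructor
    · rw [Matrix.mulVec_sub, v.2.1, hd1, sub_zero]
    · rw [hsub, v.2.2, hd2]; abel⟩
  left_inv v := by ext1; simp
  right_inv v := by ext1; simp

lemma count_aux {V : Type} [AddCommGroup V] [Fintype V] [DecidableEq V]
    (A : Matrix (Fin m) (Fin n) F) (φ : (Fin n → F) → V)
    (hadd : ∀ a b : Fin n → F, φ (a + b) = φ a + φ b)
    (hsub : ∀ a b : Fin n → F, φ (a - b) = φ a - φ b)
    (hsurj : ∀ t : V, ∃ v, A.mulVec v = 0 ∧ φ v = t) (τ : V) :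
    Fintype.card V * Fintype.card {v : Fin n → F // A.mulVec v = 0 ∧ φ v = τ}
      = Fintype.card {v : Fin n → F // A.mulVec v = 0} := by
  classical
  have key : ∀ t : V, Fintype.card {v : Fin n → F // A.mulVec v = 0 ∧ φ v = t}
      = Fintype.card {v : Fin n → F // A.mulVec v = 0 ∧ φ v = τ} := by
    intro t
    obtain ⟨d, hd1, hd2⟩ := hsurj (τ - t)
    exact Fintype.card_congr (fiberEquiv A φ hadd hsub d hd1 hd2)
  have e1 : {v : Fin n → F // A.mulVec v = 0} ≃
      Σ t : V, {w : {v : Fin n → F // A.mulVec v = 0} // φ w.1 = t} :=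
    (Equiv.sigmaFiberEquiv (fun w : {v : Fin n → F // A.mulVec v = 0} => φ w.1)).symm
  have e2 : ∀ t : V, {w : {v : Fin n → F // A.mulVec v = 0} // φ w.1 = t} ≃
      {v : Fin n → F // A.mulVec v = 0 ∧ φ v = t} :=
    fun t => Equiv.subtypeSubtypeEquivSubtypeInter (fun v => A.mulVec v = 0) (fun v => φ v = t)
  rw [Fintype.card_congr e1, Fintype.card_sigma]
  have hterm : ∀ t : V, Fintype.card {w : {v : Fin n → F // A.mulVec v = 0} // φ w.1 = t}
      = Fintype.card {v : Fin n → F // A.mulVec v = 0 ∧ φ v = τ} := by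
    intro t
    rw [Fintype.card_congr (e2 t), key t]
  rw [Finset.sum_congr rfl (fun t _ => hterm t), Finset.sum_const, Finset.card_univ,
    smul_eq_mul]

lemma ratio_aux {a b k : ℕ} (hk : 0 < k) (h : a * b = k) :
    (b : ℝ) / (k : ℝ) = 1 / (a : ℝ) := by
  have ha : a ≠ 0 := by rintro rfl; omega
  have hb : b ≠ 0 := by rintro rfl; omega
  have haR : (a : ℝ) ≠ 0 := Nat.cast_ne_zero.mpr ha
  have hbR : (b : ℝ) ≠ 0 := Nat.cast_ne_zero.mpr hb
  subst h
  push_cast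
  field_simp

lemma surj_single (A : Matrix (Fin m) (Fin n) F) {i : Fin n} (h : ¬ frozenP A i) (t : F) :
    ∃ v : Fin n → F, A.mulVec v = 0 ∧ v i = t := by
  simp only [frozenP, not_forall] at h
  obtain ⟨u, hu, hui⟩ := h
  refine ⟨(t * (u i)⁻¹) • u, ?_, ?_⟩
  · rw [Matrix.mulVec_smul, hu, smul_zero]
  · simp only [Pi.smul_apply, smul_eq_mul]
    field_simp

lemma surj_pair (A : Matrix (Fin m) (Fin n) F) {i j : Fin n}
    (hi : ¬ frozenP A i) (hj : ¬ frozenP A j) (hr : ¬ relP A i j) (a b : F) :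
    ∃ v : Fin n → F, A.mulVec v = 0 ∧ v i = a ∧ v j = b := by
  simp only [frozenP, not_forall] at hi
  obtain ⟨u, hu, hui⟩ := hi
  set u' : Fin n → F := (u i)⁻¹ • u with hu'def
  have hu'0 : A.mulVec u' = 0 := by rw [hu'def, Matrix.mulVec_smul, hu, smul_zero]
  have hu'i : u' i = 1 := by
    simp only [hu'def, Pi.smul_apply, smul_eq_mul]
    exact inv_mul_cancel₀ hui
  have hw : ∃ w : Fin n → F, A.mulVec w = 0 ∧ w j ≠ u' j * w i := by
    by_contra hcon
    push_neg at hcon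
    by_cases hz : u' j = 0
    · apply hj
      intro v hv
      rw [hcon v hv, hz, zero_mul]
    · exact hr ⟨u' j, hz, hcon⟩
  obtain ⟨w, hw0, hwij⟩ := hw
  set w' : Fin n → F := w - (w i) • u' with hw'def
  have hw'0 : A.mulVec w' = 0 := by
    rw [hw'def, Matrix.mulVec_sub, Matrix.mulVec_smul, hw0, hu'0, smul_zero, sub_zero]
  have hw'i : w' i = 0 := by
    simp only [hw'def, Pi.sub_apply, Pi.smul_apply, smul_eq_mul, hu'i, mul_one, sub_self]
  have hw'j : w' j ≠ 0 := by
    simp only [hw'def, Pi.sub_apply, Pi.smul_apply, smul_eq_mul]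
    intro hzero
    apply hwij
    rw [mul_comm]
    exact sub_eq_zero.mp hzero
  refine ⟨a • u' + ((b - a * u' j) * (w' j)⁻¹) • w', ?_, ?_, ?_⟩
  · have h1 : A.mulVec (a • u') = 0 := by rw [Matrix.mulVec_smul, hu'0, smul_zero]
    have h2 : A.mulVec (((b - a * u' j) * (w' j)⁻¹) • w') = 0 := by
      rw [Matrix.mulVec_smul, hw'0, smul_zero]
    rw [Matrix.mulVec_add, h1, h2, add_zero]
  · simp only [Pi.add_apply, Pi.smul_apply, smul_eq_mul, hu'i, hw'i, mul_one, mul_zero, add_zero]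
  · simp only [Pi.add_apply, Pi.smul_apply, smul_eq_mul]
    rw [mul_assoc, inv_mul_cancel₀ hw'j, mul_one]
    ring

end Aux

/-- Lemma 2.2: the kernel correlation decomposition of the column set of a matrix over a
finite field.  `S 0` is the set of frozen coordinates; on each other class the marginal is
uniform and coordinates are deterministically linearly related; coordinates in distinct
classes are independent with uniform joint marginal. -/
theorem stmt_3 {F : Type} [Field F] [Fintype F] [DecidableEq F]
    (m n : ℕ) (q : ℕ) (hq : q = Fintype.card F)
    (A : Matrix (Fin m) (Fin n) F) :
    ∃ (ℓ : ℕ) (S : Fin (ℓ + 1) → Finset (Fin n)),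
      (∀ g h : Fin (ℓ + 1), g ≠ h → Disjoint (S g) (S h)) ∧
      (∀ i : Fin n, ∃ h, i ∈ S h) ∧
      -- (i) frozen class
      (∀ i ∈ S 0, ∀ v : Fin n → F, A.mulVec v = 0 → v i = 0) ∧
      -- (ii) within a non-frozen class
      (∀ h : Fin (ℓ + 1), h ≠ 0 → ∀ i ∈ S h, ∀ j ∈ S h,
        (∀ τ : F,
          (Fintype.card {v : Fin n → F // A.mulVec v = 0 ∧ v i = τ} : ℝ)
            / (Fintype.card {v : Fin n → F // A.mulVec v = 0} : ℝ) = 1 / q) ∧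
        ∃ s : F, s ≠ 0 ∧ ∀ v : Fin n → F, A.mulVec v = 0 → v j = s * v i) ∧
      -- (iii) across distinct non-frozen classes
      (∀ g h : Fin (ℓ + 1), g ≠ 0 → h ≠ 0 → g ≠ h → ∀ i ∈ S g, ∀ j ∈ S h,
        ∀ τ τ' : F,
          (Fintype.card {v : Fin n → F // A.mulVec v = 0 ∧ v i = τ ∧ v j = τ'} : ℝ)
            / (Fintype.card {v : Fin n → F // A.mulVec v = 0} : ℝ) = 1 / (q : ℝ) ^ 2) := by
  classical
  set R := classSet A with hR
  set e := R.equivFin with he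
  refine ⟨R.card, fun h => Fin.cases (Finset.univ.filter (frozenP A))
    (fun k => (e.symm k).1) h, ?_, ?_, ?_, ?_, ?_⟩
  · -- disjointness
    intro g h hgh
    rw [Finset.disjoint_left]
    intro x hxg hxh
    rcases Fin.eq_zero_or_eq_succ g with rfl | ⟨kg, rfl⟩ <;>
      rcases Fin.eq_zero_or_eq_succ h with rfl | ⟨kh, rfl⟩
    · exact hgh rfl
    · simp only [Fin.cases_zero, Finset.mem_filter] at hxg
      simp only [Fin.cases_succ] at hxh
      obtain ⟨i0, hi0, hc⟩ := mem_classSet.mp (e.symm kh).2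
      rw [← hc, mem_classOf] at hxh
      exact not_frozen_of_rel hi0 hxh hxg.2
    · simp only [Fin.cases_zero, Finset.mem_filter] at hxh
      simp only [Fin.cases_succ] at hxg
      obtain ⟨i0, hi0, hc⟩ := mem_classSet.mp (e.symm kg).2
      rw [← hc, mem_classOf] at hxg
      exact not_frozen_of_rel hi0 hxg hxh.2
    · simp only [Fin.cases_succ] at hxg hxh
      obtain ⟨i0, hi0, hc0⟩ := mem_classSet.mp (e.symm kg).2
      obtain ⟨j0, hj0, hc1⟩ := mem_classSet.mp (e.symm kh).2
      rw [← hc0, mem_classOf] at hxg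
      rw [← hc1, mem_classOf] at hxh
      have : relP A i0 j0 := relP_trans hxg (relP_symm hxh)
      have hceq : (e.symm kg).1 = (e.symm kh).1 := by
        rw [← hc0, ← hc1, classOf_eq this]
      have : kg = kh := by
        have := e.symm.injective (Subtype.ext hceq)
        exact this
      exact hgh (by rw [this])
  · -- cover
    intro i
    by_cases hf : frozenP A i
    · exact ⟨0, by simp only [Fin.cases_zero, Finset.mem_filter]; exact ⟨Finset.mem_univ i, hf⟩⟩
    · have hc : classOf A i ∈ R := mem_classSet.mpr ⟨i, hf, rfl⟩
      refine ⟨(e ⟨classOf A i, hc⟩).succ, ?_⟩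
      simp only [Fin.cases_succ, Equiv.symm_apply_apply]
      exact mem_classOf.mpr (relP_refl A i)
  · -- (i)
    intro i hi v hv
    simp only [Fin.cases_zero, Finset.mem_filter] at hi
    exact hi.2 v hv
  · -- (ii)
    intro h hne i hi j hj
    obtain ⟨k, rfl⟩ := Fin.eq_succ_of_ne_zero hne
    simp only [Fin.cases_succ] at hi hj
    obtain ⟨i0, hi0, hc⟩ := mem_classSet.mp (e.symm k).2
    rw [← hc, mem_classOf] at hi hj
    have hrel : relP A i j := relP_trans (relP_symm hi) hj
    have hnfi : ¬ frozenP A i := not_frozen_of_rel hi0 hi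
    constructor
    · intro τ
      have hcount := count_aux A (fun v => v i) (fun _ _ => rfl) (fun _ _ => rfl)
        (fun t => surj_single A hnfi t) τ
      have hK : 0 < Fintype.card {v : Fin n → F // A.mulVec v = 0} :=
        Fintype.card_pos_iff.mpr ⟨⟨0, Matrix.mulVec_zero A⟩⟩
      rw [ratio_aux hK hcount, hq]
    · exact hrel
  · -- (iii)
    intro g h hg0 hh0 hgh i hi j hj τ τ'
    obtain ⟨kg, rfl⟩ := Fin.eq_succ_of_ne_zero hg0
    obtain ⟨kh, rfl⟩ := Fin.eq_succ_of_ne_zero hh0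
    simp only [Fin.cases_succ] at hi hj
    obtain ⟨i0, hi0, hc0⟩ := mem_classSet.mp (e.symm kg).2
    obtain ⟨j0, hj0, hc1⟩ := mem_classSet.mp (e.symm kh).2
    rw [← hc0, mem_classOf] at hi
    rw [← hc1, mem_classOf] at hj
    have hnfi : ¬ frozenP A i := not_frozen_of_rel hi0 hi
    have hnfj : ¬ frozenP A j := not_frozen_of_rel hj0 hj
    have hnr : ¬ relP A i j := by
      intro hr
      have : relP A i0 j0 := relP_trans hi (relP_trans hr (relP_symm hj))
      have hceq : (e.symm kg).1 = (e.symm kh).1 := by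
        rw [← hc0, ← hc1, classOf_eq this]
      exact hgh (by rw [e.symm.injective (Subtype.ext hceq)])
    have hsurj : ∀ t : F × F, ∃ v : Fin n → F, A.mulVec v = 0 ∧ (v i, v j) = t := by
      rintro ⟨a, b⟩
      obtain ⟨v, hv0, hvi, hvj⟩ := surj_pair A hnfi hnfj hnr a b
      exact ⟨v, hv0, by rw [hvi, hvj]⟩
    have hcount := count_aux A (fun v => (v i, v j)) (fun _ _ => rfl) (fun _ _ => rfl)
      hsurj (τ, τ')
    have hcongr : Fintype.card {v : Fin n → F // A.mulVec v = 0 ∧ (v i, v j) = (τ, τ')}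
        = Fintype.card {v : Fin n → F // A.mulVec v = 0 ∧ v i = τ ∧ v j = τ'} := by
      apply Fintype.card_congr
      apply Equiv.subtypeEquivRight
      intro v
      simp [Prod.ext_iff, and_assoc]
    rw [hcongr] at hcount
    have hK : 0 < Fintype.card {v : Fin n → F // A.mulVec v = 0} :=
      Fintype.card_pos_iff.mpr ⟨⟨0, Matrix.mulVec_zero A⟩⟩
    rw [ratio_aux hK hcount, Fintype.card_prod, ← hq]
    push_cast
    rw [sq]
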